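/- Let Λ > 0 and Σ a closed stable CMC surface in an electrostatic system. If |Σ| ≥ 12π/Λ, then √(|Σ|/4π)·[(H²/16π)|Σ| + (4π/|Σ|)Q(Σ)² + (Λ/3)(|Σ|/4π) - 1] ≥ 0, and hence the charged Hawking mass M_CH(Σ) is nonnegative. -/
import Mathlib

/-- Nonnegativity of the charged Hawking mass for stable CMC surfaces: if
`Λ > 0`, `Σ` is a closed stable CMC surface with mean curvature `H`, area
`A = |Σ| ≥ 12π/Λ` and charge `Q = Q(Σ)`, then the lower bound
`√(A/4π)[(H²/16π)A + (4π/A)Q² + (Λ/3)(A/4π) - 1]` is nonnegative; hence any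
charged Hawking mass `mCH` satisfying this lower bound is nonnegative. -/
theorem stable_cmc_mass_nonneg (Λ A H Q mCH : ℝ) (hΛ : 0 < Λ) (hA : 0 < A)
    (harea : 12 * Real.pi / Λ ≤ A)
    (hbound : Real.sqrt (A / (4 * Real.pi)) *
        (H ^ 2 / (16 * Real.pi) * A + 4 * Real.pi / A * Q ^ 2
          + (Λ / 3) * (A / (4 * Real.pi)) - 1) ≤ mCH) :
    0 ≤ Real.sqrt (A / (4 * Real.pi)) *
        (H ^ 2 / (16 * Real.pi) * A + 4 * Real.pi / A * Q ^ 2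
          + (Λ / 3) * (A / (4 * Real.pi)) - 1) ∧
      0 ≤ mCH := by
  have hπ := Real.pi_pos
  have h1 : (1 : ℝ) ≤ (Λ / 3) * (A / (4 * Real.pi)) := by
    rw [div_le_iff₀ hΛ] at harea
    rw [div_mul_div_comm, le_div_iff₀ (by positivity)]
    nlinarith
  have h2 : 0 ≤ H ^ 2 / (16 * Real.pi) * A + 4 * Real.pi / A * Q ^ 2
      + (Λ / 3) * (A / (4 * Real.pi)) - 1 := by
    have hq : 0 ≤ 4 * Real.pi / A * Q ^ 2 := by positivity
    have hh : 0 ≤ H ^ 2 / (16 * Real.pi) * A := by positivity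
    linarith
  have h3 : 0 ≤ Real.sqrt (A / (4 * Real.pi)) *
      (H ^ 2 / (16 * Real.pi) * A + 4 * Real.pi / A * Q ^ 2
        + (Λ / 3) * (A / (4 * Real.pi)) - 1) :=
    mul_nonneg (Real.sqrt_nonneg _) h2
  exact ⟨h3, le_trans h3 hbound⟩
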